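/- Let L/K be a (possibly infinite) Galois extension of fields, let K' be a field extension of K, and let L' be a field containing both L and K' with L' Galois over K'. Then the restriction homomorphism Gal(L'/K') → Gal(L/L ∩ K') is surjective. -/

import Mathlib

open Polynomial IntermediateField in
theorem aux_mem_bot_of_fixed {K L : Type*} [Field K] [Field L] [Algebra K L]
    [Normal K L] [Algebra.IsSeparable K L]
    (y : L) (h : ∀ σ : L ≃ₐ[K] L, σ y = y) : y ∈ (algebraMap K L).range := by
  have hK' : ∀ s : L, IsIntegral K s ∧ ((minpoly K s).map (algebraMap K L)).Splits :=
    fun s => ⟨(Normal.isIntegral ‹Normal K L› s), Normal.splits ‹_› s⟩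
  have hint : IsIntegral K y := (hK' y).1
  have hroot : ∀ z ∈ (minpoly K y).rootSet L, z = y := by
    intro z hz
    rw [Polynomial.mem_rootSet] at hz
    obtain ⟨φ, hφ⟩ := IntermediateField.exists_algHom_of_splits_of_aeval hK' hz.2
    haveI : Algebra.IsAlgebraic K L := Normal.toIsAlgebraic
    have := h (AlgEquiv.ofBijective φ (Algebra.IsAlgebraic.algHom_bijective φ))
    rw [show (AlgEquiv.ofBijective φ _ : L ≃ₐ[K] L) y = φ y from rfl, hφ] at this
    exact this
  rw [← minpoly.natDegree_eq_one_iff]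
  have hsep : (minpoly K y).Separable := Algebra.IsSeparable.isSeparable K y
  have hcard := Polynomial.card_rootSet_eq_natDegree hsep ((hK' y).2)
  have hle : (minpoly K y).natDegree ≤ 1 := by
    rw [← hcard]
    refine Fintype.card_le_one_iff.2 fun a b => Subtype.ext ?_
    rw [hroot a a.2, hroot b b.2]
  exact le_antisymm hle (minpoly.natDegree_pos hint)

open IntermediateField in
theorem aux_key_finite
    (K L' : Type*) [Field K] [Field L'] [Algebra K L']
    (L K' : IntermediateField K L')
    (hL : IsGalois K L)
    (hL' : IsGalois (↥K') L')
    (τ : ↥L ≃ₐ[K] ↥L)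
    (hτ : ∀ x : L', (hx : x ∈ L ⊓ K') →
      τ ⟨x, (inf_le_left : L ⊓ K' ≤ L) hx⟩ = ⟨x, (inf_le_left : L ⊓ K' ≤ L) hx⟩)
    (s : Finset ↥L) :
    ∃ σ : L' ≃ₐ[↥K'] L', ∀ x ∈ s, σ ↑x = ↑(τ x) := by
  haveI := hL; haveI := hL'
  haveI : Normal (↥K') L' := IsGalois.to_normal
  haveI : Algebra.IsSeparable (↥K') L' := IsGalois.to_isSeparable
  let F := FiniteGaloisIntermediateField.adjoin K ((s : Set ↥L))
  letI : Algebra (↥F) L' := (L.val.comp F.toIntermediateField.val).toRingHom.toAlgebra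
  letI : IsScalarTower K (↥F) L' := IsScalarTower.of_algebraMap_eq fun x => rfl
  haveI : Normal K (↥F) := IsGalois.to_normal
  let ρ : (L' ≃ₐ[↥K'] L') →* ((↥F) ≃ₐ[K] ↥F) :=
    (AlgEquiv.restrictNormalHom (F := K) (K₁ := L') ↥F).comp
      (MonoidHom.mk' (fun σ => σ.restrictScalars K) (fun a b => rfl))
  let H : Subgroup ((↥F) ≃ₐ[K] ↥F) := ρ.range
  let θ : (↥F) ≃ₐ[K] ↥F := AlgEquiv.restrictNormalHom (F := K) (K₁ := ↥L) ↥F τ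
  have hθ : θ ∈ IntermediateField.fixingSubgroup (IntermediateField.fixedField H) := by
    rw [IntermediateField.mem_fixingSubgroup_iff]
    intro x hx
    have hxK' : (algebraMap (↥F) L' x) ∈ K' := by
      have hfix : ∀ σ : L' ≃ₐ[↥K'] L',
          σ (algebraMap (↥F) L' x) = algebraMap (↥F) L' x := by
        intro σ
        have h1 : ρ σ x = x := hx ⟨ρ σ, ⟨σ, rfl⟩⟩
        calc σ (algebraMap (↥F) L' x)
            = algebraMap (↥F) L' (ρ σ x) :=
              (AlgEquiv.restrictNormal_commutes (σ.restrictScalars K) ↥F x).symm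
          _ = algebraMap (↥F) L' x := by rw [h1]
      obtain ⟨c, hc⟩ := aux_mem_bot_of_fixed (K := ↥K') (algebraMap (↥F) L' x) hfix
      rw [← hc]; exact c.2
    have hxL : (algebraMap (↥F) L' x) ∈ L := ((x : ↥L)).2
    have hτx : τ ↑x = ↑x := by
      have := hτ (algebraMap (↥F) L' x) ⟨hxL, hxK'⟩
      convert this using 2 <;> rfl
    have h2 := AlgEquiv.restrictNormal_commutes τ ↥F x
    have h3 : algebraMap (↥F) ↥L x = ↑x := rfl
    rw [h3, hτx] at h2
    exact (algebraMap (↥F) ↥L).injective h2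
  rw [IntermediateField.fixingSubgroup_fixedField H] at hθ
  obtain ⟨σ, hσ⟩ := hθ
  refine ⟨σ, fun x hxs => ?_⟩
  have hxF : x ∈ F.toIntermediateField :=
    FiniteGaloisIntermediateField.subset_adjoin K ((s : Set ↥L)) hxs
  have h1 := AlgEquiv.restrictNormal_commutes (σ.restrictScalars K) ↥F ⟨x, hxF⟩
  have hσ' : (AlgEquiv.restrictNormal (σ.restrictScalars K) ↥F) = θ := hσ
  rw [hσ'] at h1
  have h2 := AlgEquiv.restrictNormal_commutes τ ↥F ⟨x, hxF⟩
  have h3 : algebraMap (↥F) ↥L ⟨x, hxF⟩ = x := rfl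
  rw [h3] at h2
  have h4 : algebraMap (↥F) L' ⟨x, hxF⟩ = ↑x := rfl
  rw [h4] at h1
  have h6 : σ (↑x : L') = algebraMap (↥F) L' (θ ⟨x, hxF⟩) := h1.symm
  have h5 : ∀ y : ↥F, algebraMap (↥F) L' y = algebraMap (↥L) L' (algebraMap (↥F) ↥L y) :=
    fun y => rfl
  have h2' : (algebraMap (↥F) ↥L) (θ ⟨x, hxF⟩) = τ x := h2
  rw [h6, h5, h2']
  rfl

set_option synthInstance.maxHeartbeats 1000000
set_option maxHeartbeats 4000000

/-- Let `L/K` be a (possibly infinite) Galois extension, `K'` a field extension of `K`,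
and `L'` a field containing both `L` and `K'` with `L'` Galois over `K'` (everything
inside the common field `L'`).  Then the restriction homomorphism
`Gal(L'/K') → Gal(L/L ∩ K')` is surjective: every automorphism of `L` fixing
`L ∩ K'` pointwise lifts to an automorphism of `L'` over `K'`. -/
theorem galois_restriction_surjective
    (K L' : Type*) [Field K] [Field L'] [Algebra K L']
    (L K' : IntermediateField K L')
    (hL : IsGalois K L)
    (hL' : IsGalois (↥K') L')
    (τ : ↥L ≃ₐ[K] ↥L)
    (hτ : ∀ x : L', (hx : x ∈ L ⊓ K') →
      τ ⟨x, (inf_le_left : L ⊓ K' ≤ L) hx⟩ = ⟨x, (inf_le_left : L ⊓ K' ≤ L) hx⟩) :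
    ∃ σ : L' ≃ₐ[↥K'] L', ∀ x : L', (hx : x ∈ L) → σ x = ↑(τ ⟨x, hx⟩) := by
  haveI := hL; haveI := hL'
  haveI : Normal (↥K') L' := IsGalois.to_normal
  haveI : Algebra.IsSeparable (↥K') L' := IsGalois.to_isSeparable
  haveI : Algebra.IsAlgebraic (↥K') L' := Normal.toIsAlgebraic
  letI : Algebra (↥(L ⊓ K')) (↥K') :=
    (IntermediateField.inclusion (inf_le_right : L ⊓ K' ≤ K')).toRingHom.toAlgebra
  letI : Algebra (↥(L ⊓ K')) (↥L) :=
    (IntermediateField.inclusion (inf_le_left : L ⊓ K' ≤ L)).toRingHom.toAlgebra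
  letI : IsScalarTower (↥(L ⊓ K')) (↥K') L' := IsScalarTower.of_algebraMap_eq fun x => rfl
  letI : IsScalarTower (↥(L ⊓ K')) (↥L) L' := IsScalarTower.of_algebraMap_eq fun x => rfl
  let τ' : ↥L →ₐ[↥(L ⊓ K')] L' :=
    { toRingHom := L.val.toRingHom.comp (τ : ↥L →+* ↥L),
      commutes' := fun r => congrArg L.val (hτ (↑r) r.2) }
  let ι : ↥L →ₐ[↥(L ⊓ K')] L' :=
    { toRingHom := L.val.toRingHom, commutes' := fun r => rfl }
  let κ : ↥K' →ₐ[↥K'] L' := Algebra.ofId _ _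
  let gg : (TensorProduct (↥(L ⊓ K')) (↥K') (↥L)) →ₐ[↥K'] L' :=
    Algebra.TensorProduct.lift κ τ' (fun a b => Commute.all _ _)
  let hh : (TensorProduct (↥(L ⊓ K')) (↥K') (↥L)) →ₐ[↥K'] L' :=
    Algebra.TensorProduct.lift κ ι (fun a b => Commute.all _ _)
  have hmemrange : ∀ y : ↥L, (↑y : L') ∈ hh.range := by
    intro y
    refine ⟨(1 : ↥K') ⊗ₜ[↥(L ⊓ K')] y, ?_⟩
    show hh _ = _
    rw [Algebra.TensorProduct.lift_tmul, map_one, one_mul]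
    rfl
  have hker : ∀ z, z ∈ RingHom.ker hh → gg z = 0 := by
    intro z hz
    rw [RingHom.mem_ker] at hz
    classical
    obtain ⟨S, hS⟩ := TensorProduct.exists_finset z
    obtain ⟨σ, hσ⟩ := aux_key_finite K L' L K' hL hL' τ hτ (S.image Prod.snd)
    have hgz : gg z = σ (hh z) := by
      rw [hS, map_sum, map_sum, map_sum]
      refine Finset.sum_congr rfl fun p hp => ?_
      rw [Algebra.TensorProduct.lift_tmul, Algebra.TensorProduct.lift_tmul, map_mul]
      have h1 : σ ↑p.2 = ↑(τ p.2) := hσ p.2 (Finset.mem_image_of_mem _ hp)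
      have h2 : σ (κ p.1) = κ p.1 := σ.commutes p.1
      rw [h2]
      congr 1
      exact h1.symm
    rw [hgz, hz, map_zero]
  let e : ((TensorProduct (↥(L ⊓ K')) (↥K') (↥L)) ⧸ RingHom.ker hh) ≃ₐ[↥K'] hh.range :=
    Ideal.quotientKerEquivRange hh
  let gbar : ((TensorProduct (↥(L ⊓ K')) (↥K') (↥L)) ⧸ RingHom.ker hh) →ₐ[↥K'] L' :=
    Ideal.Quotient.liftₐ (RingHom.ker hh) gg hker
  have hcomp : ∀ t, e (Ideal.Quotient.mk (RingHom.ker hh) t) = hh.rangeRestrict t :=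
    fun t => rfl
  let σ0' : ↥hh.range →ₐ[↥K'] L' := gbar.comp e.symm.toAlgHom
  have hσ0' : ∀ t, σ0' (hh.rangeRestrict t) = gg t := by
    intro t
    show gbar (e.symm (hh.rangeRestrict t)) = gg t
    rw [← hcomp t, AlgEquiv.symm_apply_apply]
    rfl
  let M : IntermediateField (↥K') L' := hh.range.toIntermediateField (fun x hx =>
    Subalgebra.inv_mem_of_algebraic (A := hh.range) (x := ⟨x, hx⟩)
      (Algebra.IsAlgebraic.isAlgebraic x))
  have hM : ∀ y : ↥L, (↑y : L') ∈ M := fun y => hmemrange y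
  let jinc : ↥M →ₐ[↥K'] ↥hh.range :=
    { toFun := fun x => ⟨x.1, x.2⟩, map_one' := rfl, map_mul' := fun _ _ => rfl,
      map_zero' := rfl, map_add' := fun _ _ => rfl, commutes' := fun _ => rfl }
  let σ0 : ↥M →ₐ[↥K'] L' := σ0'.comp jinc
  have hsplits : ∀ x : L', IsIntegral (↥K') x ∧
      ((minpoly (↥K') x).map (algebraMap (↥K') L')).Splits :=
    fun x => ⟨Algebra.IsIntegral.isIntegral x, Normal.splits ‹_› x⟩
  obtain ⟨φ, hφ⟩ := IntermediateField.exists_algHom_of_splits (f := σ0) hsplits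
  refine ⟨AlgEquiv.ofBijective φ (Algebra.IsAlgebraic.algHom_bijective φ), ?_⟩
  intro x hx
  have hyM : x ∈ M := hM ⟨x, hx⟩
  have e1 : φ x = σ0 ⟨x, hyM⟩ := (DFunLike.congr_fun hφ (⟨x, hyM⟩ : ↥M) : _)
  have e2 : σ0 ⟨x, hyM⟩ = gg ((1 : ↥K') ⊗ₜ[↥(L ⊓ K')] (⟨x, hx⟩ : ↥L)) := by
    have h7 : (jinc ⟨x, hyM⟩ : ↥hh.range)
        = hh.rangeRestrict ((1 : ↥K') ⊗ₜ[↥(L ⊓ K')] (⟨x, hx⟩ : ↥L)) := by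
      apply Subtype.ext
      show x = hh _
      rw [Algebra.TensorProduct.lift_tmul, map_one, one_mul]
      rfl
    show σ0' (jinc ⟨x, hyM⟩) = _
    rw [h7, hσ0']
  have e3 : gg ((1 : ↥K') ⊗ₜ[↥(L ⊓ K')] (⟨x, hx⟩ : ↥L)) = ↑(τ ⟨x, hx⟩) := by
    rw [Algebra.TensorProduct.lift_tmul, map_one, one_mul]
    rfl
  show φ x = _
  rw [e1, e2, e3]
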